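/- Let γ > 0, v = (B, w, z) with B ≠ 0, and ξ = (ξ₁, ξ₂) ∈ ℝ². Then the characteristic polynomial of Ã(ξ, v) factors as det(λI₅ − Ã(ξ, v)) = (λ − (w − Bz)·ξ)² · (λ − (w + (1−B)z)·ξ) · ((λ − (w + (1−B)z)·ξ)² − γ|ξ|²). In particular all eigenvalues of Ã(ξ, v) are real, namely (w − Bz)·ξ (with multiplicity two), (w + (1−B)z)·ξ, and (w + (1−B)z)·ξ ± √γ·|ξ|. -/

import Mathlib

open Matrix

set_option maxHeartbeats 4000000
set_option maxRecDepth 100000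

lemma detlit {K : Type*} [CommRing K]
 (a b c d e f g h i j k l m n o p q r s t u v w x y : K) :
    (!![a,b,c,d,e; f,g,h,i,j; k,l,m,n,o; p,q,r,s,t; u,v,w,x,y]).det =
      a*g*m*s*y - a*g*m*t*x - a*g*n*r*y + a*g*n*t*w + a*g*o*r*x - a*g*o*s*w
      - a*h*l*s*y + a*h*l*t*x + a*h*n*q*y - a*h*n*t*v - a*h*o*q*x + a*h*o*s*v
      + a*i*l*r*y - a*i*l*t*w - a*i*m*q*y + a*i*m*t*v + a*i*o*q*w - a*i*o*r*v
      - a*j*l*r*x + a*j*l*s*w + a*j*m*q*x - a*j*m*s*v - a*j*n*q*w + a*j*n*r*v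
      - b*f*m*s*y + b*f*m*t*x + b*f*n*r*y - b*f*n*t*w - b*f*o*r*x + b*f*o*s*w
      + b*h*k*s*y - b*h*k*t*x - b*h*n*p*y + b*h*n*t*u + b*h*o*p*x - b*h*o*s*u
      - b*i*k*r*y + b*i*k*t*w + b*i*m*p*y - b*i*m*t*u - b*i*o*p*w + b*i*o*r*u
      + b*j*k*r*x - b*j*k*s*w - b*j*m*p*x + b*j*m*s*u + b*j*n*p*w - b*j*n*r*u
      + c*f*l*s*y - c*f*l*t*x - c*f*n*q*y + c*f*n*t*v + c*f*o*q*x - c*f*o*s*v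
      - c*g*k*s*y + c*g*k*t*x + c*g*n*p*y - c*g*n*t*u - c*g*o*p*x + c*g*o*s*u
      + c*i*k*q*y - c*i*k*t*v - c*i*l*p*y + c*i*l*t*u + c*i*o*p*v - c*i*o*q*u
      - c*j*k*q*x + c*j*k*s*v + c*j*l*p*x - c*j*l*s*u - c*j*n*p*v + c*j*n*q*u
      - d*f*l*r*y + d*f*l*t*w + d*f*m*q*y - d*f*m*t*v - d*f*o*q*w + d*f*o*r*v
      + d*g*k*r*y - d*g*k*t*w - d*g*m*p*y + d*g*m*t*u + d*g*o*p*w - d*g*o*r*u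
      - d*h*k*q*y + d*h*k*t*v + d*h*l*p*y - d*h*l*t*u - d*h*o*p*v + d*h*o*q*u
      + d*j*k*q*w - d*j*k*r*v - d*j*l*p*w + d*j*l*r*u + d*j*m*p*v - d*j*m*q*u
      + e*f*l*r*x - e*f*l*s*w - e*f*m*q*x + e*f*m*s*v + e*f*n*q*w - e*f*n*r*v
      - e*g*k*r*x + e*g*k*s*w + e*g*m*p*x - e*g*m*s*u - e*g*n*p*w + e*g*n*r*u
      + e*h*k*q*x - e*h*k*s*v - e*h*l*p*x + e*h*l*s*u + e*h*n*p*v - e*h*n*q*u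
      - e*i*k*q*w + e*i*k*r*v + e*i*l*p*w - e*i*l*r*u - e*i*m*p*v + e*i*m*q*u := by
  have h1 : ∀ h, (⟨((3:Fin 4):ℕ), h⟩ : Fin 5) = 3 := fun _ => rfl
  have h2 : ∀ h, (⟨((2:Fin 3):ℕ), h⟩ : Fin 4) = 2 := fun _ => rfl
  have h3 : ∀ h, (⟨((1:Fin 2):ℕ), h⟩ : Fin 3) = 1 := fun _ => rfl
  simp [Matrix.det_succ_row_zero, Fin.sum_univ_succ, Fin.succAbove]
  ring

lemma key {K : Type*} [Field K] (γ B w1 w2 z1 z2 ξ1 ξ2 lam : K) (hB : B ≠ 0) :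
    (lam • (1 : Matrix (Fin 5) (Fin 5) K) -
      (ξ1 • !![w1 + z1 * (1 - 2 * B), B, 0, B * (1 - B), 0;
         γ + z1 ^ 2 * (1 - 2 * B), w1 + B * z1, 0, 2 * B * z1 * (1 - B), 0;
         z1 * z2 * (1 - 2 * B), B * z2, w1, B * z2 * (1 - B), B * z1 * (1 - B);
         γ / B - z1 ^ 2, z1, 0, w1 + z1 * (1 - 2 * B), 0;
         -(z1 * z2), 0, z1, 0, w1 + z1 * (1 - 2 * B)] +
       ξ2 • !![w2 + z2 * (1 - 2 * B), 0, B, 0, B * (1 - B);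
         z1 * z2 * (1 - 2 * B), w2, B * z1, B * z2 * (1 - B), B * z1 * (1 - B);
         γ + z2 ^ 2 * (1 - 2 * B), 0, w2 + B * z2, 0, 2 * B * z2 * (1 - B);
         -(z1 * z2), z2, 0, w2 + z2 * (1 - 2 * B), 0;
         γ / B - z2 ^ 2, 0, z2, 0, w2 + z2 * (1 - 2 * B)])).det =
      (lam - ((w1 - B * z1) * ξ1 + (w2 - B * z2) * ξ2)) ^ 2 *
      (lam - ((w1 + (1 - B) * z1) * ξ1 + (w2 + (1 - B) * z2) * ξ2)) *
      ((lam - ((w1 + (1 - B) * z1) * ξ1 + (w2 + (1 - B) * z2) * ξ2)) ^ 2 -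
        γ * (ξ1 ^ 2 + ξ2 ^ 2)) := by
  have hM : (lam • (1 : Matrix (Fin 5) (Fin 5) K) -
      (ξ1 • !![w1 + z1 * (1 - 2 * B), B, 0, B * (1 - B), 0;
         γ + z1 ^ 2 * (1 - 2 * B), w1 + B * z1, 0, 2 * B * z1 * (1 - B), 0;
         z1 * z2 * (1 - 2 * B), B * z2, w1, B * z2 * (1 - B), B * z1 * (1 - B);
         γ / B - z1 ^ 2, z1, 0, w1 + z1 * (1 - 2 * B), 0;
         -(z1 * z2), 0, z1, 0, w1 + z1 * (1 - 2 * B)] +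
       ξ2 • !![w2 + z2 * (1 - 2 * B), 0, B, 0, B * (1 - B);
         z1 * z2 * (1 - 2 * B), w2, B * z1, B * z2 * (1 - B), B * z1 * (1 - B);
         γ + z2 ^ 2 * (1 - 2 * B), 0, w2 + B * z2, 0, 2 * B * z2 * (1 - B);
         -(z1 * z2), z2, 0, w2 + z2 * (1 - 2 * B), 0;
         γ / B - z2 ^ 2, 0, z2, 0, w2 + z2 * (1 - 2 * B)])) =
      !![lam - (ξ1 * (w1 + z1 * (1 - 2 * B)) + ξ2 * (w2 + z2 * (1 - 2 * B))), -(ξ1 * (B) + ξ2 * (0)), -(ξ1 * (0) + ξ2 * (B)), -(ξ1 * (B * (1 - B)) + ξ2 * (0)), -(ξ1 * (0) + ξ2 * (B * (1 - B)));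
       -(ξ1 * (γ + z1 ^ 2 * (1 - 2 * B)) + ξ2 * (z1 * z2 * (1 - 2 * B))), lam - (ξ1 * (w1 + B * z1) + ξ2 * (w2)), -(ξ1 * (0) + ξ2 * (B * z1)), -(ξ1 * (2 * B * z1 * (1 - B)) + ξ2 * (B * z2 * (1 - B))), -(ξ1 * (0) + ξ2 * (B * z1 * (1 - B)));
       -(ξ1 * (z1 * z2 * (1 - 2 * B)) + ξ2 * (γ + z2 ^ 2 * (1 - 2 * B))), -(ξ1 * (B * z2) + ξ2 * (0)), lam - (ξ1 * (w1) + ξ2 * (w2 + B * z2)), -(ξ1 * (B * z2 * (1 - B)) + ξ2 * (0)), -(ξ1 * (B * z1 * (1 - B)) + ξ2 * (2 * B * z2 * (1 - B)));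
       -(ξ1 * (γ / B - z1 ^ 2) + ξ2 * (-(z1 * z2))), -(ξ1 * (z1) + ξ2 * (z2)), -(ξ1 * (0) + ξ2 * (0)), lam - (ξ1 * (w1 + z1 * (1 - 2 * B)) + ξ2 * (w2 + z2 * (1 - 2 * B))), -(ξ1 * (0) + ξ2 * (0));
       -(ξ1 * (-(z1 * z2)) + ξ2 * (γ / B - z2 ^ 2)), -(ξ1 * (0) + ξ2 * (0)), -(ξ1 * (z1) + ξ2 * (z2)), -(ξ1 * (0) + ξ2 * (0)), lam - (ξ1 * (w1 + z1 * (1 - 2 * B)) + ξ2 * (w2 + z2 * (1 - 2 * B)))] := by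
    ext i j
    fin_cases i <;> fin_cases j <;>
      simp (config := { decide := true }) [Matrix.one_apply] <;> ring
  rw [hM, detlit]
  field_simp
  ring



/-- The flux matrix `Ã₁(v)` of the two-phase system in the variables `v = (B, w, z)`. -/
noncomputable def At1 (γ B w1 w2 z1 z2 : ℝ) : Matrix (Fin 5) (Fin 5) ℝ :=
  !![w1 + z1 * (1 - 2 * B), B, 0, B * (1 - B), 0;
     γ + z1 ^ 2 * (1 - 2 * B), w1 + B * z1, 0, 2 * B * z1 * (1 - B), 0;
     z1 * z2 * (1 - 2 * B), B * z2, w1, B * z2 * (1 - B), B * z1 * (1 - B);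
     γ / B - z1 ^ 2, z1, 0, w1 + z1 * (1 - 2 * B), 0;
     -(z1 * z2), 0, z1, 0, w1 + z1 * (1 - 2 * B)]

/-- The flux matrix `Ã₂(v)` of the two-phase system in the variables `v = (B, w, z)`. -/
noncomputable def At2 (γ B w1 w2 z1 z2 : ℝ) : Matrix (Fin 5) (Fin 5) ℝ :=
  !![w2 + z2 * (1 - 2 * B), 0, B, 0, B * (1 - B);
     z1 * z2 * (1 - 2 * B), w2, B * z1, B * z2 * (1 - B), B * z1 * (1 - B);
     γ + z2 ^ 2 * (1 - 2 * B), 0, w2 + B * z2, 0, 2 * B * z2 * (1 - B);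
     -(z1 * z2), z2, 0, w2 + z2 * (1 - 2 * B), 0;
     γ / B - z2 ^ 2, 0, z2, 0, w2 + z2 * (1 - 2 * B)]

/-- The symbol `Ã(ξ, v) = ξ₁Ã₁(v) + ξ₂Ã₂(v)`. -/
noncomputable def At (γ B w1 w2 z1 z2 ξ1 ξ2 : ℝ) : Matrix (Fin 5) (Fin 5) ℝ :=
  ξ1 • At1 γ B w1 w2 z1 z2 + ξ2 • At2 γ B w1 w2 z1 z2

lemma hmap (γ B w1 w2 z1 z2 ξ1 ξ2 : ℝ) :
    (At γ B w1 w2 z1 z2 ξ1 ξ2).map Complex.ofReal =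
      (ξ1 : ℂ) • !![(w1:ℂ) + z1 * (1 - 2 * B), B, 0, B * (1 - B), 0;
         γ + z1 ^ 2 * (1 - 2 * B), w1 + B * z1, 0, 2 * B * z1 * (1 - B), 0;
         z1 * z2 * (1 - 2 * B), B * z2, w1, B * z2 * (1 - B), B * z1 * (1 - B);
         γ / B - z1 ^ 2, z1, 0, w1 + z1 * (1 - 2 * B), 0;
         -(z1 * z2), 0, z1, 0, w1 + z1 * (1 - 2 * B)] +
      (ξ2 : ℂ) • !![(w2:ℂ) + z2 * (1 - 2 * B), 0, B, 0, B * (1 - B);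
         z1 * z2 * (1 - 2 * B), w2, B * z1, B * z2 * (1 - B), B * z1 * (1 - B);
         γ + z2 ^ 2 * (1 - 2 * B), 0, w2 + B * z2, 0, 2 * B * z2 * (1 - B);
         -(z1 * z2), z2, 0, w2 + z2 * (1 - 2 * B), 0;
         γ / B - z2 ^ 2, 0, z2, 0, w2 + z2 * (1 - 2 * B)] := by
  ext i j
  fin_cases i <;> fin_cases j <;>
    simp [At, At1, At2, Matrix.map_apply] <;> push_cast <;> ring

/-- The characteristic polynomial of `Ã(ξ, v)` factors as
`(λ − (w−Bz)·ξ)² (λ − (w+(1−B)z)·ξ) ((λ − (w+(1−B)z)·ξ)² − γ|ξ|²)`; in particular all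
(complex) eigenvalues of `Ã(ξ, v)` are real, namely `(w−Bz)·ξ` (with multiplicity two),
`(w+(1−B)z)·ξ`, and `(w+(1−B)z)·ξ ± √γ·|ξ|`. -/
theorem stmt1 (γ B w1 w2 z1 z2 ξ1 ξ2 : ℝ) (hγ : 0 < γ) (hB : B ≠ 0) :
    (∀ lam : ℝ,
      (lam • (1 : Matrix (Fin 5) (Fin 5) ℝ) - At γ B w1 w2 z1 z2 ξ1 ξ2).det =
        (lam - ((w1 - B * z1) * ξ1 + (w2 - B * z2) * ξ2)) ^ 2 *
        (lam - ((w1 + (1 - B) * z1) * ξ1 + (w2 + (1 - B) * z2) * ξ2)) *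
        ((lam - ((w1 + (1 - B) * z1) * ξ1 + (w2 + (1 - B) * z2) * ξ2)) ^ 2 -
          γ * (ξ1 ^ 2 + ξ2 ^ 2))) ∧
    spectrum ℂ ((At γ B w1 w2 z1 z2 ξ1 ξ2).map (Complex.ofReal)) =
      {(((w1 - B * z1) * ξ1 + (w2 - B * z2) * ξ2 : ℝ) : ℂ),
       (((w1 + (1 - B) * z1) * ξ1 + (w2 + (1 - B) * z2) * ξ2 : ℝ) : ℂ),
       (((w1 + (1 - B) * z1) * ξ1 + (w2 + (1 - B) * z2) * ξ2
          - Real.sqrt γ * Real.sqrt (ξ1 ^ 2 + ξ2 ^ 2) : ℝ) : ℂ),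
       (((w1 + (1 - B) * z1) * ξ1 + (w2 + (1 - B) * z2) * ξ2
          + Real.sqrt γ * Real.sqrt (ξ1 ^ 2 + ξ2 ^ 2) : ℝ) : ℂ)} := by
  constructor
  · intro lam
    simpa only [At, At1, At2] using key γ B w1 w2 z1 z2 ξ1 ξ2 lam hB
  · set a : ℝ := (w1 - B * z1) * ξ1 + (w2 - B * z2) * ξ2 with ha
    set b : ℝ := (w1 + (1 - B) * z1) * ξ1 + (w2 + (1 - B) * z2) * ξ2 with hb
    set s : ℝ := Real.sqrt γ * Real.sqrt (ξ1 ^ 2 + ξ2 ^ 2) with hsdef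
    have hs2 : s ^ 2 = γ * (ξ1 ^ 2 + ξ2 ^ 2) := by
      rw [hsdef, mul_pow, Real.sq_sqrt hγ.le, Real.sq_sqrt (by positivity)]
    have hB' : (B : ℂ) ≠ 0 := by exact_mod_cast hB
    have hdet : ∀ μ : ℂ,
        (μ • (1 : Matrix (Fin 5) (Fin 5) ℂ) -
          (At γ B w1 w2 z1 z2 ξ1 ξ2).map Complex.ofReal).det =
        (μ - (a : ℂ)) ^ 2 * (μ - (b : ℂ)) * ((μ - (b : ℂ)) ^ 2 - (s : ℂ) ^ 2) := by
      intro μ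
      rw [hmap]
      rw [key (γ:ℂ) (B:ℂ) (w1:ℂ) (w2:ℂ) (z1:ℂ) (z2:ℂ) (ξ1:ℂ) (ξ2:ℂ) μ hB']
      have : ((s : ℂ)) ^ 2 = (γ:ℂ) * ((ξ1:ℂ) ^ 2 + (ξ2:ℂ) ^ 2) := by
        exact_mod_cast congrArg (Complex.ofReal) hs2
      rw [this, ha, hb]
      push_cast
      ring
    ext μ
    rw [spectrum.mem_iff, Algebra.algebraMap_eq_smul_one,
      Matrix.isUnit_iff_isUnit_det, isUnit_iff_ne_zero, not_ne_iff, hdet μ]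
    have hfac : (μ - (a : ℂ)) ^ 2 * (μ - (b : ℂ)) * ((μ - (b : ℂ)) ^ 2 - (s : ℂ) ^ 2) =
        (μ - (a : ℂ)) ^ 2 * (μ - (b : ℂ)) * ((μ - ((b : ℂ) - s)) * (μ - ((b : ℂ) + s))) := by
      ring
    rw [hfac]
    simp only [Set.mem_insert_iff, Set.mem_singleton_iff, mul_eq_zero,
      pow_eq_zero_iff (two_ne_zero), sub_eq_zero]
    push_cast
    constructor
    · rintro ((h | h) | (h | h)) <;> tauto
    · rintro (h | h | h | h) <;> tauto
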